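/- arXiv:1609.02743 — 5 statements merged into one kernel-verified Lean document; each statement's English description precedes it below -/
import Mathlib

section
/- Let k ∈ ℕ with k > 1 and let j be an even index with 0 ≤ j ≤ 2^k − 4, so that both squares Q_{k,j} and Q_{k,j+1} are defined. Then for every i ∈ {1,2,3,4} and both choices of sign, the Lebesgue measure satisfies L²((Q_{k,j} ∪ Q_{k,j+1}) ∩ Ω^{p_v}_{±i}) ≥ (1/8)·(1/2^k)². -/
open MeasureTheory Set
open scoped ENNReal NNReal

noncomputable section

/-- The plane `ℝ²`. -/
abbrev E2 := EuclideanSpace ℝ (Fin 2)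

/-- The point `(x, y) ∈ ℝ²`. -/
def pt (x y : ℝ) : E2 := WithLp.toLp 2 ![x, y]

def A1 : Matrix (Fin 2) (Fin 2) ℝ := !![1, 0; 0, 1]
def A2 : Matrix (Fin 2) (Fin 2) ℝ := !![0, 1; 1, 0]
def A3 : Matrix (Fin 2) (Fin 2) ℝ := !![-1, 0; 0, 1]
def A4 : Matrix (Fin 2) (Fin 2) ℝ := !![0, -1; 1, 0]

/-- The set `E = {±A₁, ±A₂, ±A₃, ±A₄}`. -/
def Eset : Set (Matrix (Fin 2) (Fin 2) ℝ) := {A1, -A1, A2, -A2, A3, -A3, A4, -A4}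

/-- The continuous linear map on `ℝ²` associated to a `2 × 2` matrix. -/
def matCLM (A : Matrix (Fin 2) (Fin 2) ℝ) : E2 →L[ℝ] E2 :=
  LinearMap.toContinuousLinearMap (Matrix.toEuclideanLin A)

/-- `a(x,y) = min {1+x, 1−x, 1+y, 1−y}`. -/
def aFun (x y : ℝ) : ℝ := min (min (1 + x) (1 - x)) (min (1 + y) (1 - y))

/-- `b(x,y) = max {1−|x|, 1−|y|}`. -/
def bFun (x y : ℝ) : ℝ := max (1 - |x|) (1 - |y|)

/-- The function `c` of the construction. -/
def cFun (x y : ℝ) : ℝ :=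
  if |x| ≤ y then 1 - |x|
  else if |y| ≤ -x then 1 - y
  else if |x| ≤ -y then 1 - x
  else 1 - |y|

/-- The function `d` of the construction. -/
def dFun (x y : ℝ) : ℝ :=
  if |x| ≤ y then 1 - x
  else if |y| ≤ -x then 1 + y
  else if |x| ≤ -y then 1 - |x|
  else 1 - |y|

/-- The rescaling `f_k(x,y) = 2^{−k} f(2^k x, 2^k y)`. -/
def resc (f : ℝ → ℝ → ℝ) (k : ℕ) (x y : ℝ) : ℝ :=
  (2 : ℝ) ^ (-(k : ℤ)) * f ((2 : ℝ) ^ k * x) ((2 : ℝ) ^ k * y)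

/-- `x₀ = 0`, `x_k = 2 − 2^{1−k}` for `k ≥ 1`. -/
def xc : ℕ → ℝ
  | 0 => 0
  | (k + 1) => 2 - (2 : ℝ) ^ (1 - ((k : ℤ) + 1))

/-- `y_k^i = i · 2^{1−k}`. -/
def yc (k i : ℕ) : ℝ := (i : ℝ) * (2 : ℝ) ^ (1 - (k : ℤ))

/-- The open square `Q_{k,i} = (x_{k−1}, x_k) × (y_k^i, y_k^{i+1})`. -/
def Qki (k i : ℕ) : Set E2 :=
  {z | z 0 ∈ Set.Ioo (xc (k - 1)) (xc k) ∧ z 1 ∈ Set.Ioo (yc k i) (yc k (i + 1))}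

/-- The triangle `T = {(x,y) : 0 ≤ y ≤ x ≤ 2}`. -/
def Tset : Set E2 := {z | 0 ≤ z 1 ∧ z 1 ≤ z 0 ∧ z 0 ≤ 2}

/-- The open square `Q = (−2,2) × (−2,2)`. -/
def Qsq : Set E2 := {z | z 0 ∈ Set.Ioo (-2 : ℝ) 2 ∧ z 1 ∈ Set.Ioo (-2 : ℝ) 2}

/-- First coordinate of the center of `Q_{k,i}`. -/
def ctrX (k : ℕ) : ℝ := (xc (k - 1) + xc k) / 2

/-- Second coordinate of the center of `Q_{k,i}`. -/
def ctrY (k i : ℕ) : ℝ := (yc k i + yc k (i + 1)) / 2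

/-- The formula for the second component of `p_v` on `Q_{k,i} ∩ T` (in shifted coordinates):
`b_k` if `i = 2^k − 2`, `d_k` if `i` is even (hence `i ≤ 2^k − 4`), `c_k` if `i` is odd
(hence `i ≤ 2^k − 3`). -/
def secondFun (k i : ℕ) (x y : ℝ) : ℝ :=
  if i = 2 ^ k - 2 then resc bFun k x y
  else if i % 2 = 0 then resc dFun k x y
  else resc cFun k x y

/-- The defining properties of the vectorial pyramid `p_v` on the closed square `[−2,2]²`:
on each `Q_{k,i} ∩ T` it is given by the explicit formulas; each component is invariant under
the reflections `(x,y) ↦ (y,x)`, `(x,y) ↦ (−x,y)`, `(x,y) ↦ (x,−y)`; and it vanishes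
on `∂Q`. -/
def PyramidSpec (p : E2 → E2) : Prop :=
  (∀ k : ℕ, 1 ≤ k → ∀ i : ℕ, i ≤ 2 ^ k - 2 → ∀ z ∈ Qki k i ∩ Tset,
      p z 0 = resc aFun k (z 0 - ctrX k) (z 1 - ctrY k i) ∧
      p z 1 = secondFun k i (z 0 - ctrX k) (z 1 - ctrY k i)) ∧
  (∀ x y : ℝ,
      p (pt y x) = p (pt x y) ∧ p (pt (-x) y) = p (pt x y) ∧ p (pt x (-y)) = p (pt x y)) ∧
  (∀ z ∈ frontier Qsq, p z = 0)

/-- The set `Ω^{p}_{A} = {z ∈ Q : p is differentiable at z with Dp(z) = A}`. -/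
def OmegaSet (p : E2 → E2) (A : Matrix (Fin 2) (Fin 2) ℝ) : Set E2 :=
  {z | z ∈ Qsq ∧ HasFDerivAt p (matCLM A) z}

section branches
variable {X Y : ℝ}

lemma aFun_left (h : |Y| ≤ -X) : aFun X Y = 1 + X := by
  obtain ⟨h1, h2⟩ := abs_le.1 h
  have := abs_nonneg Y
  have e1 : min (1+X) (1-X) = 1 + X := min_eq_left (by linarith)
  rw [aFun, e1, min_eq_left (le_min (by linarith) (by linarith))]

lemma aFun_right (h : |Y| ≤ X) : aFun X Y = 1 - X := by
  obtain ⟨h1, h2⟩ := abs_le.1 h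
  have := abs_nonneg Y
  have e1 : min (1+X) (1-X) = 1 - X := min_eq_right (by linarith)
  rw [aFun, e1, min_eq_left (le_min (by linarith) (by linarith))]

lemma aFun_bottom (h : |X| ≤ -Y) : aFun X Y = 1 + Y := by
  obtain ⟨h1, h2⟩ := abs_le.1 h
  have := abs_nonneg X
  have e1 : min (1+Y) (1-Y) = 1 + Y := min_eq_left (by linarith)
  rw [aFun, e1, min_eq_right (le_min (by linarith) (by linarith))]

lemma aFun_top (h : |X| ≤ Y) : aFun X Y = 1 - Y := by
  obtain ⟨h1, h2⟩ := abs_le.1 h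
  have := abs_nonneg X
  rw [aFun, show min (1+Y) (1-Y) = 1-Y from min_eq_right (by linarith),
    min_eq_right (le_min (by linarith) (by linarith))]

lemma dFun_top (h : |X| ≤ Y) : dFun X Y = 1 - X := by
  rw [dFun, if_pos h]

lemma dFun_left (h : |Y| < -X) : dFun X Y = 1 + Y := by
  have h1 := le_abs_self Y
  have h2 := neg_le_abs X
  rw [dFun, if_neg (by push_neg; linarith), if_pos h.le]

lemma dFun_bottom_neg (h1 : X < 0) (h2 : |X| < -Y) : dFun X Y = 1 + X := by
  have h3 := le_abs_self Y
  have h4 := neg_le_abs Y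
  have h5 : |X| = -X := abs_of_neg h1
  rw [dFun, if_neg (by push_neg; linarith), if_neg (by push_neg; linarith),
    if_pos h2.le, h5]
  ring

lemma dFun_right_pos (h1 : 0 < Y) (h2 : |Y| < X) : dFun X Y = 1 - Y := by
  have h3 := le_abs_self Y
  have h4 := neg_le_abs Y
  have h5 := le_abs_self X
  have h6 : |Y| = Y := abs_of_pos h1
  rw [dFun, if_neg (by push_neg; linarith), if_neg (by push_neg; linarith),
    if_neg (by push_neg; linarith), h6]

lemma cFun_top_neg (h1 : X < 0) (h2 : |X| < Y) : cFun X Y = 1 + X := by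
  rw [cFun, if_pos h2.le, abs_of_neg h1]; ring

lemma cFun_left (h : |Y| < -X) : cFun X Y = 1 - Y := by
  have h1 := le_abs_self Y
  have h2 := neg_le_abs X
  rw [cFun, if_neg (by push_neg; linarith), if_pos h.le]

lemma cFun_bottom (h : |X| < -Y) : cFun X Y = 1 - X := by
  have h1 := abs_nonneg X
  have h2 := le_abs_self Y
  have h3 := neg_le_abs Y
  have h4 := neg_le_abs X
  rw [cFun, if_neg (by push_neg; linarith), if_neg (by push_neg; linarith),
    if_pos h.le]

lemma cFun_right_neg (h1 : Y < 0) (h2 : |Y| < X) : cFun X Y = 1 + Y := by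
  have h3 := le_abs_self Y
  have h4 := neg_le_abs Y
  have h5 := le_abs_self X
  have h6 : |Y| = -Y := abs_of_neg h1
  rw [cFun, if_neg (by push_neg; linarith), if_neg (by push_neg; linarith),
    if_neg (by push_neg; linarith), h6]
  ring

end branches

section rescs
variable (k : ℕ) {u v : ℝ}

lemma two_pow_H : (2:ℝ) ^ (-(k : ℤ)) * (2:ℝ) ^ k = 1 := by
  rw [zpow_neg, zpow_natCast]
  exact inv_mul_cancel₀ (by positivity)

lemma abs_scale_le {t s : ℝ} (h : |t| ≤ s) : |(2:ℝ)^k * t| ≤ (2:ℝ)^k * s := by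
  rw [abs_mul, abs_of_pos (by positivity : (0:ℝ) < 2^k)]
  exact mul_le_mul_of_nonneg_left h (by positivity)

lemma abs_scale_lt {t s : ℝ} (h : |t| < s) : |(2:ℝ)^k * t| < (2:ℝ)^k * s := by
  rw [abs_mul, abs_of_pos (by positivity : (0:ℝ) < 2^k)]
  exact (mul_lt_mul_iff_right₀ (by positivity)).2 h

lemma resc_aFun_left (h : |v| ≤ -u) : resc aFun k u v = 2^(-(k:ℤ)) + u := by
  have h' : |(2:ℝ)^k * v| ≤ -((2:ℝ)^k * u) := by rw [← mul_neg]; exact abs_scale_le k h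
  rw [resc, aFun_left h']; linear_combination u * two_pow_H k

lemma resc_aFun_right (h : |v| ≤ u) : resc aFun k u v = 2^(-(k:ℤ)) - u := by
  rw [resc, aFun_right (abs_scale_le k h)]; linear_combination (-u) * two_pow_H k

lemma resc_aFun_bottom (h : |u| ≤ -v) : resc aFun k u v = 2^(-(k:ℤ)) + v := by
  have h' : |(2:ℝ)^k * u| ≤ -((2:ℝ)^k * v) := by rw [← mul_neg]; exact abs_scale_le k h
  rw [resc, aFun_bottom h']; linear_combination v * two_pow_H k

lemma resc_aFun_top (h : |u| ≤ v) : resc aFun k u v = 2^(-(k:ℤ)) - v := by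
  rw [resc, aFun_top (abs_scale_le k h)]; linear_combination (-v) * two_pow_H k

lemma resc_dFun_top (h : |u| ≤ v) : resc dFun k u v = 2^(-(k:ℤ)) - u := by
  rw [resc, dFun_top (abs_scale_le k h)]; linear_combination (-u) * two_pow_H k

lemma resc_dFun_left (h : |v| < -u) : resc dFun k u v = 2^(-(k:ℤ)) + v := by
  have h' : |(2:ℝ)^k * v| < -((2:ℝ)^k * u) := by rw [← mul_neg]; exact abs_scale_lt k h
  rw [resc, dFun_left h']; linear_combination v * two_pow_H k

lemma resc_dFun_bottom_neg (h1 : u < 0) (h2 : |u| < -v) :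
    resc dFun k u v = 2^(-(k:ℤ)) + u := by
  have h1' : (2:ℝ)^k * u < 0 := mul_neg_of_pos_of_neg (by positivity) h1
  have h2' : |(2:ℝ)^k * u| < -((2:ℝ)^k * v) := by rw [← mul_neg]; exact abs_scale_lt k h2
  rw [resc, dFun_bottom_neg h1' h2']; linear_combination u * two_pow_H k

lemma resc_dFun_right_pos (h1 : 0 < v) (h2 : |v| < u) :
    resc dFun k u v = 2^(-(k:ℤ)) - v := by
  have h1' : (0:ℝ) < (2:ℝ)^k * v := by positivity
  rw [resc, dFun_right_pos h1' (abs_scale_lt k h2)]; linear_combination (-v) * two_pow_H k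

lemma resc_cFun_top_neg (h1 : u < 0) (h2 : |u| < v) :
    resc cFun k u v = 2^(-(k:ℤ)) + u := by
  have h1' : (2:ℝ)^k * u < 0 := mul_neg_of_pos_of_neg (by positivity) h1
  rw [resc, cFun_top_neg h1' (abs_scale_lt k h2)]; linear_combination u * two_pow_H k

lemma resc_cFun_left (h : |v| < -u) : resc cFun k u v = 2^(-(k:ℤ)) - v := by
  have h' : |(2:ℝ)^k * v| < -((2:ℝ)^k * u) := by rw [← mul_neg]; exact abs_scale_lt k h
  rw [resc, cFun_left h']; linear_combination (-v) * two_pow_H k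

lemma resc_cFun_bottom (h : |u| < -v) : resc cFun k u v = 2^(-(k:ℤ)) - u := by
  have h' : |(2:ℝ)^k * u| < -((2:ℝ)^k * v) := by rw [← mul_neg]; exact abs_scale_lt k h
  rw [resc, cFun_bottom h']; linear_combination (-u) * two_pow_H k

lemma resc_cFun_right_neg (h1 : v < 0) (h2 : |v| < u) :
    resc cFun k u v = 2^(-(k:ℤ)) + v := by
  have h1' : (2:ℝ)^k * v < 0 := mul_neg_of_pos_of_neg (by positivity) h1
  rw [resc, cFun_right_neg h1' (abs_scale_lt k h2)]; linear_combination v * two_pow_H k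

end rescs


/-- The open test rectangle. -/
def Rect (k i : ℕ) (a b : ℝ) : Set E2 :=
  {z | z 0 ∈ Set.Ioo (ctrX k + a) (ctrX k + a + (2:ℝ)^(-(k:ℤ))/2) ∧
       z 1 ∈ Set.Ioo (ctrY k i + b) (ctrY k i + b + (2:ℝ)^(-(k:ℤ))/2)}

lemma xc_eq {k : ℕ} (hk : 1 ≤ k) : xc k = 2 - (2:ℝ) ^ (1 - (k:ℤ)) := by
  obtain ⟨n, rfl⟩ : ∃ n, k = n + 1 := ⟨k - 1, by omega⟩
  rw [xc]; push_cast; ring_nf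

lemma zpow_one_sub (k : ℕ) : (2:ℝ) ^ (1 - (k:ℤ)) = 2 * (2:ℝ)^(-(k:ℤ)) := by
  rw [show (1 - (k:ℤ)) = (-(k:ℤ)) + 1 by ring, zpow_add₀ (two_ne_zero), zpow_one]; ring

lemma ctrX_eq {k : ℕ} (hk : 2 ≤ k) : ctrX k = 2 - 3 * (2:ℝ)^(-(k:ℤ)) := by
  have h1 : xc k = 2 - 2 * (2:ℝ)^(-(k:ℤ)) := by rw [xc_eq (by omega), zpow_one_sub]
  have h2 : xc (k-1) = 2 - 4 * (2:ℝ)^(-(k:ℤ)) := by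
    rw [xc_eq (by omega : 1 ≤ k - 1), zpow_one_sub]
    have : ((k - 1 : ℕ) : ℤ) = (k:ℤ) - 1 := by omega
    rw [this, show (-((k:ℤ) - 1)) = (-(k:ℤ)) + 1 by ring, zpow_add₀ (two_ne_zero), zpow_one]
    ring
  rw [ctrX, h1, h2]; ring

lemma yc_eq (k i : ℕ) : yc k i = 2 * (i:ℝ) * (2:ℝ)^(-(k:ℤ)) := by
  rw [yc, zpow_one_sub]; ring

lemma ctrY_eq (k i : ℕ) : ctrY k i = (2 * (i:ℝ) + 1) * (2:ℝ)^(-(k:ℤ)) := by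
  rw [ctrY, yc_eq, yc_eq]; push_cast; ring

lemma isOpen_Rect (k i : ℕ) (a b : ℝ) : IsOpen (Rect k i a b) := by
  have h0 : Continuous fun z : E2 => z 0 := (EuclideanSpace.proj (0 : Fin 2)).continuous
  have h1 : Continuous fun z : E2 => z 1 := (EuclideanSpace.proj (1 : Fin 2)).continuous
  exact (isOpen_Ioo.preimage h0).inter (isOpen_Ioo.preimage h1)

lemma rect_subset {k i : ℕ} (hk : 2 ≤ k) (hile : i + 3 ≤ 2 ^ k) {a b : ℝ}
    (haL : -(2:ℝ)^(-(k:ℤ)) ≤ a) (haU : a ≤ (2:ℝ)^(-(k:ℤ))/2)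
    (hbL : -(2:ℝ)^(-(k:ℤ)) ≤ b) (hbU : b ≤ (2:ℝ)^(-(k:ℤ))/2) :
    Rect k i a b ⊆ (Qki k i ∩ Tset) ∩ Qsq := by
  set H := (2:ℝ)^(-(k:ℤ)) with hH
  have hH0 : 0 < H := by positivity
  have hprod : (2:ℝ)^k * H = 1 := by
    rw [hH, mul_comm]; exact two_pow_H k
  have h4 : (4:ℝ) ≤ (2:ℝ)^k := by
    calc (4:ℝ) = 2^2 := by norm_num
    _ ≤ 2^k := pow_le_pow_right₀ (by norm_num) hk
  have hH4 : H ≤ 1/4 := by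
    nlinarith
  have hi : (i:ℝ) + 3 ≤ (2:ℝ)^k := by
    have := hile
    have : ((i + 3 : ℕ) : ℝ) ≤ ((2^k : ℕ) : ℝ) := Nat.cast_le.2 hile
    push_cast at this; exact this
  have hcx : ctrX k = 2 - 3 * H := ctrX_eq hk
  have hxk : xc k = 2 - 2 * H := by rw [xc_eq (by omega), zpow_one_sub]
  have hxk1 : xc (k-1) = 2 - 4 * H := by
    have := ctrX_eq hk; rw [ctrX] at this
    rw [hxk] at this; linarith [this]
  intro z hz
  obtain ⟨⟨hu1, hu2⟩, hv1, hv2⟩ := hz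
  rw [hcx] at hu1 hu2
  rw [ctrY_eq] at hv1 hv2
  rw [← hH] at hu2 hv1 hv2
  have hiH0 : 0 ≤ (i:ℝ) * H := by positivity
  have hiH : (i:ℝ) * H ≤ 1 - 3 * H := by nlinarith
  have hyi : yc k i = 2 * (i:ℝ) * H := yc_eq k i
  have hyi1 : yc k (i+1) = 2 * (i:ℝ) * H + 2 * H := by rw [yc_eq]; push_cast; ring
  have hin : 0 ≤ (i:ℝ) := Nat.cast_nonneg i
  refine ⟨⟨⟨⟨?_, ?_⟩, ?_, ?_⟩, ?_, ?_, ?_⟩, ⟨?_, ?_⟩, ?_, ?_⟩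
  · rw [hxk1]; linarith
  · rw [hxk]; linarith
  · rw [hyi]; linarith
  · rw [hyi1]; linarith
  · linarith
  · linarith
  · linarith
  · linarith
  · linarith
  · linarith
  · linarith

lemma volume_prod_set (s t : Set ℝ) (hs : MeasurableSet s) (ht : MeasurableSet t) :
    volume {z : E2 | z 0 ∈ s ∧ z 1 ∈ t} = volume s * volume t := by
  have h := EuclideanSpace.volume_preserving_symm_measurableEquiv_toLp (Fin 2)
  have hset : {z : E2 | z 0 ∈ s ∧ z 1 ∈ t}
      = (MeasurableEquiv.toLp 2 (Fin 2 → ℝ)).symm ⁻¹' ((univ : Set (Fin 2)).pi ![s, t]) := by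
    ext z
    simp only [Set.mem_setOf_eq, Set.mem_preimage, Set.mem_univ_pi, Fin.forall_fin_two]; rfl
  rw [hset, h.measure_preimage ((MeasurableSet.univ_pi (by
    intro i; fin_cases i <;> simpa)).nullMeasurableSet), volume_pi_pi]
  simp [Fin.prod_univ_two]

lemma master (p : E2 → E2) (k i : ℕ) (hk : 2 ≤ k) (hile : i + 3 ≤ 2 ^ k)
    (A : Matrix (Fin 2) (Fin 2) ℝ) (w : E2) (a b : ℝ)
    (haL : -(2:ℝ)^(-(k:ℤ)) ≤ a) (haU : a ≤ (2:ℝ)^(-(k:ℤ))/2)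
    (hbL : -(2:ℝ)^(-(k:ℤ)) ≤ b) (hbU : b ≤ (2:ℝ)^(-(k:ℤ))/2)
    (hR : ∀ z ∈ Rect k i a b, p z = matCLM A z + w) :
    ENNReal.ofReal ((1/8 : ℝ) * (1/2^k)^2) ≤ volume (Qki k i ∩ OmegaSet p A) := by
  have hsub := rect_subset hk hile haL haU hbL hbU
  have hOmega : Rect k i a b ⊆ Qki k i ∩ OmegaSet p A := by
    intro z hz
    obtain ⟨⟨hQ, _⟩, hQsq⟩ := hsub hz
    refine ⟨hQ, hQsq, ?_⟩
    have hF : HasFDerivAt (fun y : E2 => matCLM A y + w) (matCLM A) z :=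
      (matCLM A).hasFDerivAt.add_const w
    exact hF.congr_of_eventuallyEq
      (Filter.eventuallyEq_of_mem ((isOpen_Rect k i a b).mem_nhds hz) hR)
  refine le_trans ?_ (measure_mono hOmega)
  have hvol : volume (Rect k i a b)
      = ENNReal.ofReal ((2:ℝ)^(-(k:ℤ))/2) * ENNReal.ofReal ((2:ℝ)^(-(k:ℤ))/2) := by
    rw [Rect, volume_prod_set _ _ measurableSet_Ioo measurableSet_Ioo,
      Real.volume_Ioo, Real.volume_Ioo,
      show ctrX k + a + (2:ℝ)^(-(k:ℤ))/2 - (ctrX k + a) = (2:ℝ)^(-(k:ℤ))/2 by ring,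
      show ctrY k i + b + (2:ℝ)^(-(k:ℤ))/2 - (ctrY k i + b) = (2:ℝ)^(-(k:ℤ))/2 by ring]
  rw [hvol, ← ENNReal.ofReal_mul (by positivity)]
  apply ENNReal.ofReal_le_ofReal
  have hHeq : (2:ℝ)^(-(k:ℤ)) = 1/2^k := by rw [zpow_neg, zpow_natCast, one_div]
  rw [hHeq]
  have h0 : (0:ℝ) < 1/2^k := by positivity
  nlinarith

lemma comp0 (A : Matrix (Fin 2) (Fin 2) ℝ) (z : E2) (c d : ℝ) :
    (matCLM A z + pt c d) 0 = A 0 0 * z 0 + A 0 1 * z 1 + c := by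
  have h1 : (matCLM A z + pt c d) 0 = matCLM A z 0 + pt c d 0 := rfl
  rw [h1]
  have h2 : matCLM A z 0 = A 0 0 * z 0 + A 0 1 * z 1 := by
    simp [matCLM, Matrix.toEuclideanLin, Matrix.mulVec, dotProduct, Fin.sum_univ_two]
  rw [h2]
  simp [pt]

lemma comp1 (A : Matrix (Fin 2) (Fin 2) ℝ) (z : E2) (c d : ℝ) :
    (matCLM A z + pt c d) 1 = A 1 0 * z 0 + A 1 1 * z 1 + d := by
  have h1 : (matCLM A z + pt c d) 1 = matCLM A z 1 + pt c d 1 := rfl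
  rw [h1]
  have h2 : matCLM A z 1 = A 1 0 * z 0 + A 1 1 * z 1 := by
    simp [matCLM, Matrix.toEuclideanLin, Matrix.mulVec, dotProduct, Fin.sum_univ_two]
  rw [h2]
  simp [pt]

set_option maxHeartbeats 3200000 in
/-- for `k > 1` and an even index `j ≤ 2^k − 4` (so that both `Q_{k,j}` and
`Q_{k,j+1}` are defined), for every matrix `±A_i ∈ E`, the Lebesgue measure of
`(Q_{k,j} ∪ Q_{k,j+1}) ∩ Ω^{p_v}_{±i}` is at least `(1/8)·(1/2^k)²`. -/
theorem stmt2 (p : E2 → E2) (hp : PyramidSpec p) (k : ℕ) (hk : 1 < k)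
    (j : ℕ) (hjeven : Even j) (hjle : j ≤ 2 ^ k - 4)
    (A : Matrix (Fin 2) (Fin 2) ℝ) (hA : A ∈ Eset) :
    ENNReal.ofReal ((1 / 8 : ℝ) * (1 / 2 ^ k) ^ 2) ≤
      volume ((Qki k j ∪ Qki k (j + 1)) ∩ OmegaSet p A) := by
  have hk2 : 2 ≤ k := hk
  have h4 : 4 ≤ 2 ^ k := by
    calc 4 = 2^2 := rfl
    _ ≤ 2^k := Nat.pow_le_pow_right (by norm_num) hk2
  have hj4 : j + 4 ≤ 2 ^ k := by omega
  have hj2 : j % 2 = 0 := Nat.even_iff.1 hjeven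
  have hH0 : (0:ℝ) < (2:ℝ)^(-(k:ℤ)) := by positivity
  simp only [Eset, Set.mem_insert_iff, Set.mem_singleton_iff] at hA
  rcases hA with rfl|rfl|rfl|rfl|rfl|rfl|rfl|rfl
  · refine le_trans (master p k j hk2 (by omega) A1 (pt ((2:ℝ)^(-(k:ℤ)) - ctrX k) ((2:ℝ)^(-(k:ℤ)) - ctrY k j)) (-(2:ℝ)^(-(k:ℤ))) (-(2:ℝ)^(-(k:ℤ))/2)
        (by linarith) (by linarith) (by linarith) (by linarith) ?_)
      (measure_mono (inter_subset_inter_left _ Set.subset_union_left))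
    intro z hz
    have hQT := (rect_subset hk2 (by omega)
      (by linarith) (by linarith) (by linarith) (by linarith) hz).1
    obtain ⟨h1, h2⟩ := hp.1 k (by omega) j (by omega) z hQT
    rw [secondFun, if_neg (show ¬(j = 2^k - 2) from by omega), if_pos hj2] at h2
    obtain ⟨⟨hu1, hu2⟩, hv1, hv2⟩ := hz
    rw [resc_aFun_left k (show |z 1 - ctrY k j| ≤ -(z 0 - ctrX k) from abs_le.2 (by constructor <;> linarith))] at h1
    rw [resc_dFun_left k (show |z 1 - ctrY k j| < -(z 0 - ctrX k) from abs_lt.2 (by constructor <;> linarith))] at h2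
    refine (WithLp.ext_iff 2).2 (funext fun idx => ?_)
    fin_cases idx
    · show p z 0 = (matCLM A1 z + pt ((2:ℝ)^(-(k:ℤ)) - ctrX k) ((2:ℝ)^(-(k:ℤ)) - ctrY k j)) 0
      rw [h1, comp0]
      simp only [A1, A2, A3, A4, Matrix.neg_apply, Matrix.cons_val', Matrix.cons_val_zero,
        Matrix.cons_val_one, Matrix.head_cons, Matrix.empty_val', Matrix.cons_val_fin_one,
        Matrix.head_fin_const, Matrix.of_apply]
      ring
    · show p z 1 = (matCLM A1 z + pt ((2:ℝ)^(-(k:ℤ)) - ctrX k) ((2:ℝ)^(-(k:ℤ)) - ctrY k j)) 1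
      rw [h2, comp1]
      simp only [A1, A2, A3, A4, Matrix.neg_apply, Matrix.cons_val', Matrix.cons_val_zero,
        Matrix.cons_val_one, Matrix.head_cons, Matrix.empty_val', Matrix.cons_val_fin_one,
        Matrix.head_fin_const, Matrix.of_apply]
      ring
  · refine le_trans (master p k j hk2 (by omega) (-A1) (pt ((2:ℝ)^(-(k:ℤ)) + ctrX k) ((2:ℝ)^(-(k:ℤ)) + ctrY k j)) ((2:ℝ)^(-(k:ℤ))/2) (0:ℝ)
        (by linarith) (by linarith) (by linarith) (by linarith) ?_)
      (measure_mono (inter_subset_inter_left _ Set.subset_union_left))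
    intro z hz
    have hQT := (rect_subset hk2 (by omega)
      (by linarith) (by linarith) (by linarith) (by linarith) hz).1
    obtain ⟨h1, h2⟩ := hp.1 k (by omega) j (by omega) z hQT
    rw [secondFun, if_neg (show ¬(j = 2^k - 2) from by omega), if_pos hj2] at h2
    obtain ⟨⟨hu1, hu2⟩, hv1, hv2⟩ := hz
    rw [resc_aFun_right k (show |z 1 - ctrY k j| ≤ (z 0 - ctrX k) from abs_le.2 (by constructor <;> linarith))] at h1
    rw [resc_dFun_right_pos k (show (0:ℝ) < (z 1 - ctrY k j) from by linarith) (show |z 1 - ctrY k j| < (z 0 - ctrX k) from abs_lt.2 (by constructor <;> linarith))] at h2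
    refine (WithLp.ext_iff 2).2 (funext fun idx => ?_)
    fin_cases idx
    · show p z 0 = (matCLM (-A1) z + pt ((2:ℝ)^(-(k:ℤ)) + ctrX k) ((2:ℝ)^(-(k:ℤ)) + ctrY k j)) 0
      rw [h1, comp0]
      simp only [A1, A2, A3, A4, Matrix.neg_apply, Matrix.cons_val', Matrix.cons_val_zero,
        Matrix.cons_val_one, Matrix.head_cons, Matrix.empty_val', Matrix.cons_val_fin_one,
        Matrix.head_fin_const, Matrix.of_apply]
      ring
    · show p z 1 = (matCLM (-A1) z + pt ((2:ℝ)^(-(k:ℤ)) + ctrX k) ((2:ℝ)^(-(k:ℤ)) + ctrY k j)) 1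
      rw [h2, comp1]
      simp only [A1, A2, A3, A4, Matrix.neg_apply, Matrix.cons_val', Matrix.cons_val_zero,
        Matrix.cons_val_one, Matrix.head_cons, Matrix.empty_val', Matrix.cons_val_fin_one,
        Matrix.head_fin_const, Matrix.of_apply]
      ring
  · refine le_trans (master p k j hk2 (by omega) A2 (pt ((2:ℝ)^(-(k:ℤ)) - ctrY k j) ((2:ℝ)^(-(k:ℤ)) - ctrX k)) (-(2:ℝ)^(-(k:ℤ))/2) (-(2:ℝ)^(-(k:ℤ)))
        (by linarith) (by linarith) (by linarith) (by linarith) ?_)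
      (measure_mono (inter_subset_inter_left _ Set.subset_union_left))
    intro z hz
    have hQT := (rect_subset hk2 (by omega)
      (by linarith) (by linarith) (by linarith) (by linarith) hz).1
    obtain ⟨h1, h2⟩ := hp.1 k (by omega) j (by omega) z hQT
    rw [secondFun, if_neg (show ¬(j = 2^k - 2) from by omega), if_pos hj2] at h2
    obtain ⟨⟨hu1, hu2⟩, hv1, hv2⟩ := hz
    rw [resc_aFun_bottom k (show |z 0 - ctrX k| ≤ -(z 1 - ctrY k j) from abs_le.2 (by constructor <;> linarith))] at h1
    rw [resc_dFun_bottom_neg k (show (z 0 - ctrX k) < 0 from by linarith) (show |z 0 - ctrX k| < -(z 1 - ctrY k j) from abs_lt.2 (by constructor <;> linarith))] at h2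
    refine (WithLp.ext_iff 2).2 (funext fun idx => ?_)
    fin_cases idx
    · show p z 0 = (matCLM A2 z + pt ((2:ℝ)^(-(k:ℤ)) - ctrY k j) ((2:ℝ)^(-(k:ℤ)) - ctrX k)) 0
      rw [h1, comp0]
      simp only [A1, A2, A3, A4, Matrix.neg_apply, Matrix.cons_val', Matrix.cons_val_zero,
        Matrix.cons_val_one, Matrix.head_cons, Matrix.empty_val', Matrix.cons_val_fin_one,
        Matrix.head_fin_const, Matrix.of_apply]
      ring
    · show p z 1 = (matCLM A2 z + pt ((2:ℝ)^(-(k:ℤ)) - ctrY k j) ((2:ℝ)^(-(k:ℤ)) - ctrX k)) 1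
      rw [h2, comp1]
      simp only [A1, A2, A3, A4, Matrix.neg_apply, Matrix.cons_val', Matrix.cons_val_zero,
        Matrix.cons_val_one, Matrix.head_cons, Matrix.empty_val', Matrix.cons_val_fin_one,
        Matrix.head_fin_const, Matrix.of_apply]
      ring
  · refine le_trans (master p k j hk2 (by omega) (-A2) (pt ((2:ℝ)^(-(k:ℤ)) + ctrY k j) ((2:ℝ)^(-(k:ℤ)) + ctrX k)) (0:ℝ) ((2:ℝ)^(-(k:ℤ))/2)
        (by linarith) (by linarith) (by linarith) (by linarith) ?_)
      (measure_mono (inter_subset_inter_left _ Set.subset_union_left))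
    intro z hz
    have hQT := (rect_subset hk2 (by omega)
      (by linarith) (by linarith) (by linarith) (by linarith) hz).1
    obtain ⟨h1, h2⟩ := hp.1 k (by omega) j (by omega) z hQT
    rw [secondFun, if_neg (show ¬(j = 2^k - 2) from by omega), if_pos hj2] at h2
    obtain ⟨⟨hu1, hu2⟩, hv1, hv2⟩ := hz
    rw [resc_aFun_top k (show |z 0 - ctrX k| ≤ (z 1 - ctrY k j) from abs_le.2 (by constructor <;> linarith))] at h1
    rw [resc_dFun_top k (show |z 0 - ctrX k| ≤ (z 1 - ctrY k j) from abs_le.2 (by constructor <;> linarith))] at h2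
    refine (WithLp.ext_iff 2).2 (funext fun idx => ?_)
    fin_cases idx
    · show p z 0 = (matCLM (-A2) z + pt ((2:ℝ)^(-(k:ℤ)) + ctrY k j) ((2:ℝ)^(-(k:ℤ)) + ctrX k)) 0
      rw [h1, comp0]
      simp only [A1, A2, A3, A4, Matrix.neg_apply, Matrix.cons_val', Matrix.cons_val_zero,
        Matrix.cons_val_one, Matrix.head_cons, Matrix.empty_val', Matrix.cons_val_fin_one,
        Matrix.head_fin_const, Matrix.of_apply]
      ring
    · show p z 1 = (matCLM (-A2) z + pt ((2:ℝ)^(-(k:ℤ)) + ctrY k j) ((2:ℝ)^(-(k:ℤ)) + ctrX k)) 1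
      rw [h2, comp1]
      simp only [A1, A2, A3, A4, Matrix.neg_apply, Matrix.cons_val', Matrix.cons_val_zero,
        Matrix.cons_val_one, Matrix.head_cons, Matrix.empty_val', Matrix.cons_val_fin_one,
        Matrix.head_fin_const, Matrix.of_apply]
      ring
  · refine le_trans (master p k (j+1) hk2 (by omega) A3 (pt ((2:ℝ)^(-(k:ℤ)) + ctrX k) ((2:ℝ)^(-(k:ℤ)) - ctrY k (j+1))) ((2:ℝ)^(-(k:ℤ))/2) (-(2:ℝ)^(-(k:ℤ))/2)
        (by linarith) (by linarith) (by linarith) (by linarith) ?_)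
      (measure_mono (inter_subset_inter_left _ Set.subset_union_right))
    intro z hz
    have hQT := (rect_subset hk2 (by omega)
      (by linarith) (by linarith) (by linarith) (by linarith) hz).1
    obtain ⟨h1, h2⟩ := hp.1 k (by omega) (j+1) (by omega) z hQT
    rw [secondFun, if_neg (show ¬((j+1) = 2^k - 2) from by omega), if_neg (show ¬((j+1) % 2 = 0) from by omega)] at h2
    obtain ⟨⟨hu1, hu2⟩, hv1, hv2⟩ := hz
    rw [resc_aFun_right k (show |z 1 - ctrY k (j+1)| ≤ (z 0 - ctrX k) from abs_le.2 (by constructor <;> linarith))] at h1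
    rw [resc_cFun_right_neg k (show (z 1 - ctrY k (j+1)) < 0 from by linarith) (show |z 1 - ctrY k (j+1)| < (z 0 - ctrX k) from abs_lt.2 (by constructor <;> linarith))] at h2
    refine (WithLp.ext_iff 2).2 (funext fun idx => ?_)
    fin_cases idx
    · show p z 0 = (matCLM A3 z + pt ((2:ℝ)^(-(k:ℤ)) + ctrX k) ((2:ℝ)^(-(k:ℤ)) - ctrY k (j+1))) 0
      rw [h1, comp0]
      simp only [A1, A2, A3, A4, Matrix.neg_apply, Matrix.cons_val', Matrix.cons_val_zero,
        Matrix.cons_val_one, Matrix.head_cons, Matrix.empty_val', Matrix.cons_val_fin_one,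
        Matrix.head_fin_const, Matrix.of_apply]
      ring
    · show p z 1 = (matCLM A3 z + pt ((2:ℝ)^(-(k:ℤ)) + ctrX k) ((2:ℝ)^(-(k:ℤ)) - ctrY k (j+1))) 1
      rw [h2, comp1]
      simp only [A1, A2, A3, A4, Matrix.neg_apply, Matrix.cons_val', Matrix.cons_val_zero,
        Matrix.cons_val_one, Matrix.head_cons, Matrix.empty_val', Matrix.cons_val_fin_one,
        Matrix.head_fin_const, Matrix.of_apply]
      ring
  · refine le_trans (master p k (j+1) hk2 (by omega) (-A3) (pt ((2:ℝ)^(-(k:ℤ)) - ctrX k) ((2:ℝ)^(-(k:ℤ)) + ctrY k (j+1))) (-(2:ℝ)^(-(k:ℤ))) (0:ℝ)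
        (by linarith) (by linarith) (by linarith) (by linarith) ?_)
      (measure_mono (inter_subset_inter_left _ Set.subset_union_right))
    intro z hz
    have hQT := (rect_subset hk2 (by omega)
      (by linarith) (by linarith) (by linarith) (by linarith) hz).1
    obtain ⟨h1, h2⟩ := hp.1 k (by omega) (j+1) (by omega) z hQT
    rw [secondFun, if_neg (show ¬((j+1) = 2^k - 2) from by omega), if_neg (show ¬((j+1) % 2 = 0) from by omega)] at h2
    obtain ⟨⟨hu1, hu2⟩, hv1, hv2⟩ := hz
    rw [resc_aFun_left k (show |z 1 - ctrY k (j+1)| ≤ -(z 0 - ctrX k) from abs_le.2 (by constructor <;> linarith))] at h1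
    rw [resc_cFun_left k (show |z 1 - ctrY k (j+1)| < -(z 0 - ctrX k) from abs_lt.2 (by constructor <;> linarith))] at h2
    refine (WithLp.ext_iff 2).2 (funext fun idx => ?_)
    fin_cases idx
    · show p z 0 = (matCLM (-A3) z + pt ((2:ℝ)^(-(k:ℤ)) - ctrX k) ((2:ℝ)^(-(k:ℤ)) + ctrY k (j+1))) 0
      rw [h1, comp0]
      simp only [A1, A2, A3, A4, Matrix.neg_apply, Matrix.cons_val', Matrix.cons_val_zero,
        Matrix.cons_val_one, Matrix.head_cons, Matrix.empty_val', Matrix.cons_val_fin_one,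
        Matrix.head_fin_const, Matrix.of_apply]
      ring
    · show p z 1 = (matCLM (-A3) z + pt ((2:ℝ)^(-(k:ℤ)) - ctrX k) ((2:ℝ)^(-(k:ℤ)) + ctrY k (j+1))) 1
      rw [h2, comp1]
      simp only [A1, A2, A3, A4, Matrix.neg_apply, Matrix.cons_val', Matrix.cons_val_zero,
        Matrix.cons_val_one, Matrix.head_cons, Matrix.empty_val', Matrix.cons_val_fin_one,
        Matrix.head_fin_const, Matrix.of_apply]
      ring
  · refine le_trans (master p k (j+1) hk2 (by omega) A4 (pt ((2:ℝ)^(-(k:ℤ)) + ctrY k (j+1)) ((2:ℝ)^(-(k:ℤ)) - ctrX k)) (-(2:ℝ)^(-(k:ℤ))/2) ((2:ℝ)^(-(k:ℤ))/2)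
        (by linarith) (by linarith) (by linarith) (by linarith) ?_)
      (measure_mono (inter_subset_inter_left _ Set.subset_union_right))
    intro z hz
    have hQT := (rect_subset hk2 (by omega)
      (by linarith) (by linarith) (by linarith) (by linarith) hz).1
    obtain ⟨h1, h2⟩ := hp.1 k (by omega) (j+1) (by omega) z hQT
    rw [secondFun, if_neg (show ¬((j+1) = 2^k - 2) from by omega), if_neg (show ¬((j+1) % 2 = 0) from by omega)] at h2
    obtain ⟨⟨hu1, hu2⟩, hv1, hv2⟩ := hz
    rw [resc_aFun_top k (show |z 0 - ctrX k| ≤ (z 1 - ctrY k (j+1)) from abs_le.2 (by constructor <;> linarith))] at h1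
    rw [resc_cFun_top_neg k (show (z 0 - ctrX k) < 0 from by linarith) (show |z 0 - ctrX k| < (z 1 - ctrY k (j+1)) from abs_lt.2 (by constructor <;> linarith))] at h2
    refine (WithLp.ext_iff 2).2 (funext fun idx => ?_)
    fin_cases idx
    · show p z 0 = (matCLM A4 z + pt ((2:ℝ)^(-(k:ℤ)) + ctrY k (j+1)) ((2:ℝ)^(-(k:ℤ)) - ctrX k)) 0
      rw [h1, comp0]
      simp only [A1, A2, A3, A4, Matrix.neg_apply, Matrix.cons_val', Matrix.cons_val_zero,
        Matrix.cons_val_one, Matrix.head_cons, Matrix.empty_val', Matrix.cons_val_fin_one,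
        Matrix.head_fin_const, Matrix.of_apply]
      ring
    · show p z 1 = (matCLM A4 z + pt ((2:ℝ)^(-(k:ℤ)) + ctrY k (j+1)) ((2:ℝ)^(-(k:ℤ)) - ctrX k)) 1
      rw [h2, comp1]
      simp only [A1, A2, A3, A4, Matrix.neg_apply, Matrix.cons_val', Matrix.cons_val_zero,
        Matrix.cons_val_one, Matrix.head_cons, Matrix.empty_val', Matrix.cons_val_fin_one,
        Matrix.head_fin_const, Matrix.of_apply]
      ring
  · refine le_trans (master p k (j+1) hk2 (by omega) (-A4) (pt ((2:ℝ)^(-(k:ℤ)) - ctrY k (j+1)) ((2:ℝ)^(-(k:ℤ)) + ctrX k)) (0:ℝ) (-(2:ℝ)^(-(k:ℤ)))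
        (by linarith) (by linarith) (by linarith) (by linarith) ?_)
      (measure_mono (inter_subset_inter_left _ Set.subset_union_right))
    intro z hz
    have hQT := (rect_subset hk2 (by omega)
      (by linarith) (by linarith) (by linarith) (by linarith) hz).1
    obtain ⟨h1, h2⟩ := hp.1 k (by omega) (j+1) (by omega) z hQT
    rw [secondFun, if_neg (show ¬((j+1) = 2^k - 2) from by omega), if_neg (show ¬((j+1) % 2 = 0) from by omega)] at h2
    obtain ⟨⟨hu1, hu2⟩, hv1, hv2⟩ := hz
    rw [resc_aFun_bottom k (show |z 0 - ctrX k| ≤ -(z 1 - ctrY k (j+1)) from abs_le.2 (by constructor <;> linarith))] at h1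
    rw [resc_cFun_bottom k (show |z 0 - ctrX k| < -(z 1 - ctrY k (j+1)) from abs_lt.2 (by constructor <;> linarith))] at h2
    refine (WithLp.ext_iff 2).2 (funext fun idx => ?_)
    fin_cases idx
    · show p z 0 = (matCLM (-A4) z + pt ((2:ℝ)^(-(k:ℤ)) - ctrY k (j+1)) ((2:ℝ)^(-(k:ℤ)) + ctrX k)) 0
      rw [h1, comp0]
      simp only [A1, A2, A3, A4, Matrix.neg_apply, Matrix.cons_val', Matrix.cons_val_zero,
        Matrix.cons_val_one, Matrix.head_cons, Matrix.empty_val', Matrix.cons_val_fin_one,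
        Matrix.head_fin_const, Matrix.of_apply]
      ring
    · show p z 1 = (matCLM (-A4) z + pt ((2:ℝ)^(-(k:ℤ)) - ctrY k (j+1)) ((2:ℝ)^(-(k:ℤ)) + ctrX k)) 1
      rw [h2, comp1]
      simp only [A1, A2, A3, A4, Matrix.neg_apply, Matrix.cons_val', Matrix.cons_val_zero,
        Matrix.cons_val_one, Matrix.head_cons, Matrix.empty_val', Matrix.cons_val_fin_one,
        Matrix.head_fin_const, Matrix.of_apply]
      ring


end
end

section
/- Let Ω ⊂ ℝⁿ be open and bounded and let {Ω_i}_{i∈I} be a finite or countable family of pairwise disjoint open subsets of Ω with Lⁿ(Ω ∖ ∪_i Ω_i) = 0. Let L > 0 and N ≥ 1, and for each i let u_i : closure(Ω_i) → ℝ^N be L-Lipschitz with u_i = 0 on ∂Ω_i. Define u : closure(Ω) → ℝ^N by u = u_i on Ω_i for each i, and u = 0 on closure(Ω) ∖ ∪_i Ω_i. Then: (1) u is Lipschitz with Lipschitz constant at most 2L; (2) |u(x)| ≤ L·d(x, ∂Ω) for every x ∈ closure(Ω), so in particular u = 0 on ∂Ω; (3) if moreover E ⊂ ℝ^{N×n}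 is a set of matrices and, for each i, u_i is differentiable at Lⁿ-a.e. point of Ω_i with Du_i ∈ E there, then u is differentiable at Lⁿ-a.e. point of Ω with Du ∈ E. -/
open MeasureTheory Set
open scoped ENNReal NNReal

noncomputable section

/-- gluing of Lipschitz maps vanishing on the boundaries of a partition of `Ω`
into countably many disjoint open sets. The glued map is `2L`-Lipschitz on `closure Ω`,
satisfies `|u(x)| ≤ L·d(x,∂Ω)` (hence vanishes on `∂Ω`), and if each piece is a.e.
differentiable with derivative in a set of matrices `E`, then so is the glued map on `Ω`. -/
theorem stmt5 (n N : ℕ) (hn : 1 ≤ n) (hN : 1 ≤ N)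
    (Ω : Set (EuclideanSpace ℝ (Fin n))) (hΩo : IsOpen Ω) (hΩb : Bornology.IsBounded Ω)
    (Ωi : ℕ → Set (EuclideanSpace ℝ (Fin n)))
    (hio : ∀ i, IsOpen (Ωi i)) (hisub : ∀ i, Ωi i ⊆ Ω)
    (hdisj : Pairwise fun i j => Disjoint (Ωi i) (Ωi j))
    (hcover : volume (Ω \ ⋃ i, Ωi i) = 0)
    (L : ℝ≥0) (hL : 0 < L)
    (v : ℕ → EuclideanSpace ℝ (Fin n) → EuclideanSpace ℝ (Fin N))
    (hvlip : ∀ i, LipschitzOnWith L (v i) (closure (Ωi i)))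
    (hvbd : ∀ i, ∀ x ∈ frontier (Ωi i), v i x = 0)
    (u : EuclideanSpace ℝ (Fin n) → EuclideanSpace ℝ (Fin N))
    (hu1 : ∀ i, ∀ x ∈ Ωi i, u x = v i x)
    (hu2 : ∀ x ∈ closure Ω \ ⋃ i, Ωi i, u x = 0) :
    LipschitzOnWith (2 * L) u (closure Ω) ∧
    (∀ x ∈ closure Ω, ‖u x‖ ≤ (L : ℝ) * Metric.infDist x (frontier Ω)) ∧
    (∀ x ∈ frontier Ω, u x = 0) ∧
    (∀ E : Set (Matrix (Fin N) (Fin n) ℝ),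
      (∀ i, ∀ᵐ x ∂(volume.restrict (Ωi i)), ∃ A ∈ E,
        HasFDerivAt (v i) (LinearMap.toContinuousLinearMap (Matrix.toEuclideanLin A)) x) →
      ∀ᵐ x ∂(volume.restrict Ω), ∃ A ∈ E,
        HasFDerivAt u (LinearMap.toContinuousLinearMap (Matrix.toEuclideanLin A)) x) := by

  classical
  haveI : Nontrivial (EuclideanSpace ℝ (Fin n)) := by
    refine ⟨⟨0, EuclideanSpace.single ⟨0, hn⟩ 1, fun h => ?_⟩⟩
    have := congrArg (fun w : EuclideanSpace ℝ (Fin n) => w ⟨0, hn⟩) h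
    simp [EuclideanSpace.single_apply] at this
  -- no subset of Ω is the whole space
  have hne_univ : ∀ s : Set (EuclideanSpace ℝ (Fin n)), s ⊆ Ω → s ≠ univ := by
    intro s hs h
    subst h
    exact NormedSpace.unbounded_univ ℝ _ (hΩb.subset (univ_subset_iff.1 hs ▸ subset_rfl))
  -- key pointwise bound
  have key : ∀ i, ∀ x ∈ Ωi i, ∀ y, y ∉ Ωi i → ‖v i x‖ ≤ (L : ℝ) * dist x y := by
    intro i x hx y hy
    obtain ⟨z, hz, hzd⟩ := exists_mem_frontier_infDist_compl_eq_dist hx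
      (hne_univ _ (hisub i))
    have h1 : ‖v i x‖ ≤ (L : ℝ) * dist x z := by
      have h := (hvlip i).dist_le_mul x (subset_closure hx) z (frontier_subset_closure hz)
      rwa [hvbd i z hz, dist_zero_right] at h
    have h2 : dist x z ≤ dist x y := by
      rw [← hzd]; exact Metric.infDist_le_dist_of_mem hy
    exact h1.trans (mul_le_mul_of_nonneg_left h2 L.coe_nonneg)
  -- claim A
  have claimA : ∀ x ∈ closure Ω, ∀ y, (∀ i, x ∈ Ωi i → y ∉ Ωi i) →
      ‖u x‖ ≤ (L : ℝ) * dist x y := by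
    intro x hx y hy
    by_cases hxu : ∃ i, x ∈ Ωi i
    · obtain ⟨i, hi⟩ := hxu
      rw [hu1 i x hi]
      exact key i x hi y (hy i hi)
    · rw [hu2 x ⟨hx, by simpa using hxu⟩]
      simp only [norm_zero]
      positivity
  have part1 : LipschitzOnWith (2 * L) u (closure Ω) := by
    apply LipschitzOnWith.of_dist_le_mul
    intro x hx y hy
    by_cases h : ∃ i, x ∈ Ωi i ∧ y ∈ Ωi i
    · obtain ⟨i, hxi, hyi⟩ := h
      rw [hu1 i x hxi, hu1 i y hyi]
      have := (hvlip i).dist_le_mul x (subset_closure hxi) y (subset_closure hyi)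
      refine this.trans ?_
      have : (L : ℝ) ≤ ((2 * L : ℝ≥0) : ℝ) := by push_cast; nlinarith [L.coe_nonneg]
      exact mul_le_mul_of_nonneg_right this dist_nonneg
    · push_neg at h
      have hy' : ∀ i, y ∈ Ωi i → x ∉ Ωi i := fun i hyi hxi => h i hxi hyi
      have b1 := claimA x hx y h
      have b2 := claimA y hy x hy'
      rw [dist_comm y x] at b2
      calc dist (u x) (u y) ≤ ‖u x‖ + ‖u y‖ := by
            rw [dist_eq_norm]; exact norm_sub_le _ _
        _ ≤ (L : ℝ) * dist x y + (L : ℝ) * dist x y := add_le_add b1 b2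
        _ = ((2 * L : ℝ≥0) : ℝ) * dist x y := by push_cast; ring
  have part2 : ∀ x ∈ closure Ω, ‖u x‖ ≤ (L : ℝ) * Metric.infDist x (frontier Ω) := by
    intro x hx
    by_cases hxu : ∃ i, x ∈ Ωi i
    · obtain ⟨i, hi⟩ := hxu
      have hxΩ : x ∈ Ω := hisub i hi
      obtain ⟨z, hz, hzd⟩ := exists_mem_frontier_infDist_compl_eq_dist hxΩ
        (hne_univ Ω subset_rfl)
      have hzc : z ∈ Ωᶜ := by
        intro hzΩ
        exact hz.2 (by rwa [hΩo.interior_eq])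
      have hb : ‖u x‖ ≤ (L : ℝ) * dist x z := by
        rw [hu1 i x hi]
        exact key i x hi z (fun hzi => hzc (hisub i hzi))
      have hfr : frontier Ω ⊆ Ωᶜ := fun w hw hwΩ => hw.2 (by rwa [hΩo.interior_eq])
      have hle : Metric.infDist x Ωᶜ ≤ Metric.infDist x (frontier Ω) :=
        Metric.infDist_le_infDist_of_subset hfr ⟨z, hz⟩
      calc ‖u x‖ ≤ (L : ℝ) * dist x z := hb
        _ = (L : ℝ) * Metric.infDist x Ωᶜ := by rw [hzd]
        _ ≤ (L : ℝ) * Metric.infDist x (frontier Ω) :=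
            mul_le_mul_of_nonneg_left hle L.coe_nonneg
    · rw [hu2 x ⟨hx, by simpa using hxu⟩]
      simp only [norm_zero]
      exact mul_nonneg L.coe_nonneg Metric.infDist_nonneg
  have part3 : ∀ x ∈ frontier Ω, u x = 0 := by
    intro x hx
    have h := part2 x (frontier_subset_closure hx)
    rw [Metric.infDist_zero_of_mem hx, mul_zero] at h
    exact norm_le_zero_iff.1 h
  refine ⟨part1, part2, part3, ?_⟩
  intro E hE
  rw [MeasureTheory.ae_iff, Measure.restrict_apply' hΩo.measurableSet]
  apply measure_mono_null
    (t := (Ω \ ⋃ i, Ωi i) ∪ ⋃ i,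
      ({a | ¬∃ A ∈ E, HasFDerivAt u
        (LinearMap.toContinuousLinearMap (Matrix.toEuclideanLin A)) a} ∩ Ωi i))
  · rintro x ⟨hPx, hxΩ⟩
    by_cases hx : ∃ i, x ∈ Ωi i
    · obtain ⟨i, hi⟩ := hx
      exact Or.inr (mem_iUnion.2 ⟨i, hPx, hi⟩)
    · exact Or.inl ⟨hxΩ, by simpa using hx⟩
  · refine measure_union_null hcover (measure_iUnion_null fun i => ?_)
    have h := hE i
    rw [MeasureTheory.ae_iff, Measure.restrict_apply' (hio i).measurableSet] at h
    refine measure_mono_null ?_ h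
    rintro x ⟨hP, hxi⟩
    refine ⟨fun hPi => hP ?_, hxi⟩
    obtain ⟨A, hA, hd⟩ := hPi
    refine ⟨A, hA, hd.congr_of_eventuallyEq ?_⟩
    exact Filter.eventuallyEq_of_mem ((hio i).mem_nhds hxi) (hu1 i)

end
end

section
/- (Cellina pyramid) Let ξ₁, …, ξ_l ∈ ℝⁿ be pairwise distinct vectors such that 0 lies in the interior of their convex hull, let x₀ ∈ ℝⁿ and r > 0. Define p(x) = r − max_{1≤i≤l} ⟨ξ_i, x − x₀⟩ and P = {x ∈ ℝⁿ : p(x) ≥ 0}. Then P is a compact convex set with x₀ in its interior; p is Lipschitz on ℝⁿ (with constant max_i |ξ_i|), p > 0 on the interior of P and p = 0 on ∂P; and at Lebesgue-almost every x ∈ interior(P) the function p is differentiable with ∇p(x) ∈ {−ξ₁, …, −ξ_l}. In particular p is a W^{1,∞}_0(P) function whose gradient takes a.e. only the finitely many values −ξ_i. -/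
open MeasureTheory Set
open scoped ENNReal NNReal RealInnerProductSpace

noncomputable section

/-- Cellina pyramid: let `ξ₁, …, ξ_l ∈ ℝⁿ` be pairwise distinct with `0` in the
interior of their convex hull, `x₀ ∈ ℝⁿ`, `r > 0`, and set `p(x) = r − max_i ⟨ξ_i, x − x₀⟩`,
`P = {x : p(x) ≥ 0}`. Then `P` is compact and convex with `x₀ ∈ interior P`; `p` is Lipschitz
with constant `max_i |ξ_i|`; `p > 0` on `interior P` and `p = 0` on `∂P`; and at Lebesgue-a.e.
`x ∈ interior P`, `p` is differentiable with gradient `∇p(x) ∈ {−ξ₁, …, −ξ_l}`. -/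
theorem stmt13 (n l : ℕ) (hl : 0 < l)
    (ξ : Fin l → EuclideanSpace ℝ (Fin n)) (hξ : Function.Injective ξ)
    (h0 : (0 : EuclideanSpace ℝ (Fin n)) ∈ interior (convexHull ℝ (Set.range ξ)))
    (x₀ : EuclideanSpace ℝ (Fin n)) (r : ℝ) (hr : 0 < r)
    (p : EuclideanSpace ℝ (Fin n) → ℝ)
    (hp : ∀ x, p x = r - ⨆ i, ⟪ξ i, x - x₀⟫)
    (P : Set (EuclideanSpace ℝ (Fin n))) (hP : P = {x | 0 ≤ p x}) :
    IsCompact P ∧ Convex ℝ P ∧ x₀ ∈ interior P ∧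
    LipschitzWith (⨆ i, ‖ξ i‖₊) p ∧
    (∀ x ∈ interior P, 0 < p x) ∧
    (∀ x ∈ frontier P, p x = 0) ∧
    (∀ᵐ x ∂(volume.restrict (interior P)), ∃ i, HasGradientAt p (-(ξ i)) x) := by
  haveI : Nonempty (Fin l) := ⟨⟨0, hl⟩⟩
  have hbdd : ∀ v : EuclideanSpace ℝ (Fin n),
      BddAbove (Set.range fun i => ⟪ξ i, v⟫) := fun v => (Set.finite_range _).bddAbove
  have attain : ∀ v : EuclideanSpace ℝ (Fin n), ∃ i, (⨆ j, ⟪ξ j, v⟫) = ⟪ξ i, v⟫ := by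
    intro v
    obtain ⟨i, hi⟩ := Finite.exists_max fun j => ⟪ξ j, v⟫
    exact ⟨i, le_antisymm (ciSup_le hi) (le_ciSup (hbdd v) i)⟩
  -- Lipschitz constant bound
  have hKle : ∀ i, ‖ξ i‖ ≤ ((⨆ i, ‖ξ i‖₊ : ℝ≥0) : ℝ) := by
    intro i
    have h := le_ciSup ((Set.finite_range fun i => ‖ξ i‖₊).bddAbove) i
    exact_mod_cast h
  have key : ∀ x y : EuclideanSpace ℝ (Fin n),
      p y - p x ≤ ((⨆ i, ‖ξ i‖₊ : ℝ≥0) : ℝ) * ‖x - y‖ := by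
    intro x y
    obtain ⟨i, hi⟩ := attain (x - x₀)
    have h2 : ⟪ξ i, y - x₀⟫ ≤ ⨆ j, ⟪ξ j, y - x₀⟫ := le_ciSup (hbdd _) i
    have h3 : ⟪ξ i, x - x₀⟫ - ⟪ξ i, y - x₀⟫ = ⟪ξ i, x - y⟫ := by
      rw [← inner_sub_right]; congr 1; abel
    have h4 : ⟪ξ i, x - y⟫ ≤ ‖ξ i‖ * ‖x - y‖ := real_inner_le_norm _ _
    have h5 : ‖ξ i‖ * ‖x - y‖ ≤ ((⨆ i, ‖ξ i‖₊ : ℝ≥0) : ℝ) * ‖x - y‖ :=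
      mul_le_mul_of_nonneg_right (hKle i) (norm_nonneg _)
    have hpy := hp y
    have hpx := hp x
    linarith
  have lip : LipschitzWith (⨆ i, ‖ξ i‖₊) p := by
    apply LipschitzWith.of_dist_le_mul
    intro x y
    rw [Real.dist_eq, dist_eq_norm, abs_sub_le_iff]
    constructor
    · have h := key y x
      rwa [norm_sub_rev] at h
    · exact key x y
  have pc : Continuous p := lip.continuous
  -- coercivity
  obtain ⟨ε, εpos, hball⟩ : ∃ ε > 0,
      Metric.ball (0 : EuclideanSpace ℝ (Fin n)) ε ⊆ convexHull ℝ (Set.range ξ) := by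
    rcases Metric.mem_nhds_iff.1 (mem_interior_iff_mem_nhds.1 h0) with ⟨ε, εpos, h⟩
    exact ⟨ε, εpos, h⟩
  have hull_le : ∀ (u w : EuclideanSpace ℝ (Fin n)), w ∈ convexHull ℝ (Set.range ξ) →
      ⟪w, u⟫ ≤ ⨆ i, ⟪ξ i, u⟫ := by
    intro u w hw
    have hconv : Convex ℝ {y : EuclideanSpace ℝ (Fin n) | ⟪y, u⟫ ≤ ⨆ i, ⟪ξ i, u⟫} :=
      convex_halfSpace_le ⟨fun a b => inner_add_left a b u, fun c a => real_inner_smul_left a u c⟩ _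
    have hsub : Set.range ξ ⊆ {y | ⟪y, u⟫ ≤ ⨆ i, ⟪ξ i, u⟫} := by
      rintro _ ⟨i, rfl⟩; exact le_ciSup (hbdd u) i
    exact convexHull_min hsub hconv hw
  have coer : ∀ u : EuclideanSpace ℝ (Fin n), ε / 2 * ‖u‖ ≤ ⨆ i, ⟪ξ i, u⟫ := by
    intro u
    rcases eq_or_ne u 0 with rfl | hu
    · simp [ciSup_const]
    · have hnu : 0 < ‖u‖ := norm_pos_iff.2 hu
      have hw : (ε / 2 / ‖u‖) • u ∈ Metric.ball (0 : EuclideanSpace ℝ (Fin n)) ε := by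
        rw [Metric.mem_ball, dist_zero_right, norm_smul, Real.norm_eq_abs,
          abs_of_pos (by positivity), div_mul_cancel₀ _ hnu.ne']
        linarith
      have h := hull_le u _ (hball hw)
      rw [real_inner_smul_left, real_inner_self_eq_norm_mul_norm] at h
      have heq : ε / 2 / ‖u‖ * (‖u‖ * ‖u‖) = ε / 2 * ‖u‖ := by
        field_simp
      rwa [heq] at h
  -- P closed, bounded, compact
  have hPclosed : IsClosed P := by
    rw [hP]; exact isClosed_le continuous_const pc
  have hPsub : P ⊆ Metric.closedBall x₀ (2 * r / ε) := by
    intro x hx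
    rw [hP, mem_setOf_eq] at hx
    have h1 : (⨆ i, ⟪ξ i, x - x₀⟫) ≤ r := by have := hp x; linarith
    have h2 := coer (x - x₀)
    rw [Metric.mem_closedBall, dist_eq_norm, le_div_iff₀ εpos]
    nlinarith
  have hPcompact : IsCompact P :=
    Metric.isCompact_of_isClosed_isBounded hPclosed (Metric.isBounded_closedBall.subset hPsub)
  -- convexity
  have hPconv : Convex ℝ P := by
    rw [hP]
    intro x hx y hy a b ha hb hab
    simp only [mem_setOf_eq] at hx hy ⊢
    rw [hp] at hx hy ⊢
    have hFx : (⨆ i, ⟪ξ i, x - x₀⟫) ≤ r := by linarith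
    have hFy : (⨆ i, ⟪ξ i, y - x₀⟫) ≤ r := by linarith
    have habr : a * r + b * r = r := by rw [← add_mul, hab, one_mul]
    have hle : (⨆ i, ⟪ξ i, a • x + b • y - x₀⟫) ≤ r := by
      apply ciSup_le
      intro i
      have hv : a • x + b • y - x₀ = a • (x - x₀) + b • (y - x₀) := by
        rw [smul_sub, smul_sub,
          show a • x - a • x₀ + (b • y - b • x₀) = a • x + b • y - (a + b) • x₀ by
            rw [add_smul]; abel,
          hab, one_smul]
      rw [hv, inner_add_right, real_inner_smul_right, real_inner_smul_right]
      have h1 : ⟪ξ i, x - x₀⟫ ≤ ⨆ j, ⟪ξ j, x - x₀⟫ := le_ciSup (hbdd _) i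
      have h2 : ⟪ξ i, y - x₀⟫ ≤ ⨆ j, ⟪ξ j, y - x₀⟫ := le_ciSup (hbdd _) i
      nlinarith [mul_le_mul_of_nonneg_left h1 ha, mul_le_mul_of_nonneg_left h2 hb,
        mul_le_mul_of_nonneg_left hFx ha, mul_le_mul_of_nonneg_left hFy hb]
    linarith
  -- open positivity set
  have hopen : IsOpen {x | 0 < p x} := isOpen_lt continuous_const pc
  have hsub0 : {x | 0 < p x} ⊆ P := by
    rw [hP]; intro x hx
    simp only [mem_setOf_eq] at hx ⊢
    exact hx.le
  have hsubint : {x | 0 < p x} ⊆ interior P := interior_maximal hsub0 hopen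
  have hx₀ : x₀ ∈ interior P := by
    apply hsubint
    have h : p x₀ = r := by
      rw [hp]
      simp [ciSup_const]
    simpa [h] using hr
  -- positivity on interior
  have hintpos : ∀ x ∈ interior P, 0 < p x := by
    intro x hx
    by_contra hle
    push_neg at hle
    have hxP : x ∈ P := interior_subset hx
    have hge : 0 ≤ p x := by rw [hP] at hxP; exact hxP
    have hp0 : p x = 0 := le_antisymm hle hge
    have hFx : (⨆ i, ⟪ξ i, x - x₀⟫) = r := by have := hp x; linarith
    obtain ⟨δ, δpos, hδ⟩ := Metric.isOpen_iff.1 isOpen_interior x hx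
    have hxne : x ≠ x₀ := by
      rintro rfl
      have h0' : (⨆ i, ⟪ξ i, x - x⟫) = (0 : ℝ) := by simp [ciSup_const]
      rw [hFx] at h0'; linarith
    have hnx : 0 < ‖x - x₀‖ := by rwa [norm_pos_iff, sub_ne_zero]
    set t : ℝ := 1 + δ / (2 * ‖x - x₀‖) with ht
    have ht1 : 1 < t := by
      rw [ht]; nlinarith [div_pos δpos (by positivity : (0:ℝ) < 2 * ‖x - x₀‖)]
    have ht0 : 0 ≤ t := by linarith
    set y : EuclideanSpace ℝ (Fin n) := x₀ + t • (x - x₀) with hy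
    have hyv : y - x₀ = t • (x - x₀) := by rw [hy]; abel
    have hyF : (⨆ i, ⟪ξ i, y - x₀⟫) = t * r := by
      rw [hyv]
      obtain ⟨i, hi⟩ := attain (x - x₀)
      obtain ⟨j, hj⟩ := attain (t • (x - x₀))
      have e : ∀ k, ⟪ξ k, t • (x - x₀)⟫ = t * ⟪ξ k, x - x₀⟫ :=
        fun k => real_inner_smul_right _ _ _
      apply le_antisymm
      · rw [hj, e j]
        have hjle : ⟪ξ j, x - x₀⟫ ≤ r := hFx ▸ le_ciSup (hbdd _) j
        exact mul_le_mul_of_nonneg_left hjle ht0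
      · have : t * r = ⟪ξ i, t • (x - x₀)⟫ := by rw [e i, ← hi, hFx]
        rw [this]
        exact le_ciSup (hbdd _) i
    have hy_not : y ∉ P := by
      rw [hP, mem_setOf_eq, hp, hyF]
      push_neg
      nlinarith
    have hy_mem : y ∈ Metric.ball x δ := by
      rw [Metric.mem_ball, dist_eq_norm]
      have hyx : y - x = (t - 1) • (x - x₀) := by
        rw [hy, sub_smul, one_smul]; abel
      rw [hyx, norm_smul, Real.norm_eq_abs, abs_of_pos (by linarith)]
      have : (t - 1) * ‖x - x₀‖ = δ / 2 := by
        rw [ht]; field_simp; ring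
      rw [this]; linarith
    exact hy_not (interior_subset (hδ hy_mem))
  -- frontier
  have hfront : ∀ x ∈ frontier P, p x = 0 := by
    intro x hx
    rw [hPclosed.frontier_eq] at hx
    obtain ⟨hxP, hxnotint⟩ := hx
    have hge : 0 ≤ p x := by rw [hP] at hxP; exact hxP
    rcases hge.lt_or_eq with h | h
    · exact absurd (hsubint h) hxnotint
    · exact h.symm
  -- gradient a.e.
  have grad : ∀ᵐ x ∂(volume.restrict (interior P)), ∃ i, HasGradientAt p (-(ξ i)) x := by
    have had := lip.ae_differentiableAt (μ := volume)
    filter_upwards [ae_restrict_of_ae had] with x hx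
    obtain ⟨i, hi⟩ := attain (x - x₀)
    refine ⟨i, ?_⟩
    have h1 : HasFDerivAt (fun y : EuclideanSpace ℝ (Fin n) => ⟪ξ i, y - x₀⟫)
        (innerSL ℝ (ξ i)) x := by
      have h2 := ((innerSL ℝ (ξ i)).hasFDerivAt (x := x)).sub_const (⟪ξ i, x₀⟫)
      simpa [inner_sub_right] using h2
    have hg : HasFDerivAt (fun y : EuclideanSpace ℝ (Fin n) => r - ⟪ξ i, y - x₀⟫)
        (-(innerSL ℝ (ξ i))) x := h1.const_sub r
    have hmax : IsLocalMax (fun y : EuclideanSpace ℝ (Fin n) => p y - (r - ⟪ξ i, y - x₀⟫)) x := by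
      refine Filter.Eventually.of_forall fun y => ?_
      simp only
      have h1' : ⟪ξ i, y - x₀⟫ ≤ ⨆ j, ⟪ξ j, y - x₀⟫ := le_ciSup (hbdd _) i
      have hpy := hp y
      have hpx := hp x
      linarith [hi.le, hi.ge]
    have hq0 : fderiv ℝ (fun y : EuclideanSpace ℝ (Fin n) => p y - (r - ⟪ξ i, y - x₀⟫)) x = 0 :=
      hmax.fderiv_eq_zero
    have hfd : fderiv ℝ p x = -(innerSL ℝ (ξ i)) := by
      have hsub := fderiv_fun_sub hx hg.differentiableAt
      rw [hq0, hg.fderiv] at hsub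
      have := sub_eq_zero.mp hsub.symm
      rw [this]
    rw [hasGradientAt_iff_hasFDerivAt]
    have htd : (InnerProductSpace.toDual ℝ (EuclideanSpace ℝ (Fin n)) (-(ξ i)))
        = -(innerSL ℝ (ξ i)) := by
      ext y
      simp [InnerProductSpace.toDual_apply_apply, inner_neg_left]
    rw [htd, ← hfd]
    exact hx.hasFDerivAt
  exact ⟨hPcompact, hPconv, hx₀, lip, hintpos, hfront, grad⟩

end
end

section
/- Let T_h be a triangular domain, let x₁⁰ ∈ (a,b) be the unique point with h(x₁⁰) = x₁⁰ + h(b) − a, and let l₀ = x₁⁰ − a be the side length of the inscribed square q(T_h) = (a, x₁⁰) × (h(b), h(b) + x₁⁰ − a). Set c₁ = −min_{[a,b]} h' and c₂ = −max_{[a,b]} h' (so 0 < c₂ ≤ c₁). Then l₀ ≤ (h(a) − h(b))/(1 + c₂) and l₀ ≤ (b − a)/(1 + 1/c₁). -/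
open Set

noncomputable section

/-- in a triangular domain `T_h`, with `x₁⁰ ∈ (a,b)` the unique point where
`h(x₁⁰) = x₁⁰ + h(b) − a` and `l₀ = x₁⁰ − a` the side of the inscribed square `q(T_h)`, and
with `c₁ = −min_{[a,b]} h'`, `c₂ = −max_{[a,b]} h'` (so `0 < c₂ ≤ c₁`), one has
`l₀ ≤ (h(a) − h(b))/(1 + c₂)` and `l₀ ≤ (b − a)/(1 + 1/c₁)`. -/
theorem stmt15 (a b : ℝ) (hab : a < b) (h h' : ℝ → ℝ)
    (hderiv : ∀ t ∈ Set.Icc a b, HasDerivWithinAt h (h' t) (Set.Icc a b) t)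
    (hcont : ContinuousOn h' (Set.Icc a b))
    (hneg : ∀ t ∈ Set.Icc a b, h' t < 0)
    (x0 : ℝ) (hx0 : x0 ∈ Set.Ioo a b) (heq : h x0 = x0 + h b - a)
    (c1 c2 : ℝ)
    (hc1 : c1 = -sInf (h' '' Set.Icc a b)) (hc2 : c2 = -sSup (h' '' Set.Icc a b)) :
    0 < c2 ∧ c2 ≤ c1 ∧
    x0 - a ≤ (h a - h b) / (1 + c2) ∧
    x0 - a ≤ (b - a) / (1 + 1 / c1) := by
  have hK : IsCompact (Set.Icc a b) := isCompact_Icc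
  have hKi : IsCompact (h' '' Set.Icc a b) := hK.image_of_continuousOn hcont
  have hne : (h' '' Set.Icc a b).Nonempty :=
    ⟨h' a, Set.mem_image_of_mem _ (Set.left_mem_Icc.2 hab.le)⟩
  obtain ⟨t, ht, hts⟩ := (Set.mem_image _ _ _).1 (hKi.sSup_mem hne)
  have hc2pos : 0 < c2 := by
    rw [hc2]
    have hun := hneg t ht
    rw [← hts]; linarith
  have hic : sInf (h' '' Set.Icc a b) ≤ sSup (h' '' Set.Icc a b) :=
    csInf_le_csSup hne hKi.bddBelow hKi.bddAbove
  have hc12 : c2 ≤ c1 := by rw [hc1, hc2]; linarith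
  have hc1pos : 0 < c1 := lt_of_lt_of_le hc2pos hc12
  have hderivAt : ∀ x ∈ Set.Ioo a b, HasDerivAt h (h' x) x := fun x hx =>
    (hderiv x (Set.Ioo_subset_Icc_self hx)).hasDerivAt (Icc_mem_nhds hx.1 hx.2)
  have hfc : ContinuousOn h (Set.Icc a b) := fun t ht => (hderiv t ht).continuousWithinAt
  have hdiff : DifferentiableOn ℝ h (interior (Set.Icc a b)) := by
    rw [interior_Icc]
    exact fun x hx => (hderivAt x hx).differentiableAt.differentiableWithinAt
  have hderiveq : ∀ x ∈ Set.Ioo a b, deriv h x = h' x := fun x hx => (hderivAt x hx).deriv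
  have hx0ab : x0 ∈ Set.Icc a b := Set.Ioo_subset_Icc_self hx0
  have hub : h x0 - h a ≤ -c2 * (x0 - a) :=
    (convex_Icc a b).image_sub_le_mul_sub_of_deriv_le hfc hdiff
      (fun x hx => by
        rw [interior_Icc] at hx
        rw [hderiveq x hx, hc2, neg_neg]
        exact le_csSup hKi.bddAbove (Set.mem_image_of_mem _ (Set.Ioo_subset_Icc_self hx)))
      a (Set.left_mem_Icc.2 hab.le) x0 hx0ab hx0.1.le
  have hlb : -c1 * (b - x0) ≤ h b - h x0 :=
    (convex_Icc a b).mul_sub_le_image_sub_of_le_deriv hfc hdiff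
      (fun x hx => by
        rw [interior_Icc] at hx
        rw [hderiveq x hx, hc1, neg_neg]
        exact csInf_le hKi.bddBelow (Set.mem_image_of_mem _ (Set.Ioo_subset_Icc_self hx)))
      x0 hx0ab b (Set.right_mem_Icc.2 hab.le) hx0.2.le
  refine ⟨hc2pos, hc12, ?_, ?_⟩
  · rw [le_div_iff₀ (by linarith : (0:ℝ) < 1 + c2)]
    nlinarith [heq]
  · have h1 : x0 - a ≤ c1 * (b - x0) := by nlinarith [heq]
    have h2 : (x0 - a) / c1 ≤ b - x0 := by
      rw [div_le_iff₀ hc1pos]; nlinarith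
    rw [le_div_iff₀ (by positivity : (0:ℝ) < 1 + 1 / c1)]
    have hr : (x0 - a) * (1 + 1 / c1) = (x0 - a) + (x0 - a) / c1 := by
      field_simp
    rw [hr]; linarith

end
end

section
/- Let T_h be a triangular domain, let x₁⁰ ∈ (a,b) be the unique point with h(x₁⁰) = x₁⁰ + h(b) − a, and let l₀ = x₁⁰ − a be the side length of the square q(T_h). Define the two triangular sub-domains u(T_h) = {(s,t) : a ≤ s ≤ x₁⁰, h(x₁⁰) ≤ t ≤ h(s)} (the triangular domain of h restricted to [a, x₁⁰]) and r(T_h) = {(s,t) : x₁⁰ ≤ s ≤ b, h(b) ≤ t ≤ h(s)} (the triangular domain of h restricted to [x₁⁰, b]). Set c₁ = −min_{[a,b]} h', c₂ = −max_{[a,b]} h', r_B = 1/(1 + 1/c₁) and r_H = 1/(1 + c₂). Then the side lengths of the inscribed squares q(u(T_h)) and q(r(T_h)) are both at most max{r_B, r_H} · l₀. Consequently, in the recursive square covering of T_h, at the m-th step each of the 2^m squares has side length at most max{h(a) − h(b), b − a} · (max{r_B, r_H})^{m+1}. -/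
open Set

noncomputable section

/-- The abscissa `x₁⁰` splitting the triangular domain of `h` over `[a,b]`: the (unique, under
the standing hypotheses) solution in `(a,b)` of `h(x) = x + h(b) − a`. The inscribed square
`q` of this triangular domain is `(a, x₁⁰) × (h(b), h(b) + x₁⁰ − a)`, of side `x₁⁰ − a`. -/
def splitPt (h : ℝ → ℝ) (a b : ℝ) : ℝ :=
  sInf {x | x ∈ Set.Ioo a b ∧ h x = x + h b - a}

/-- Iteration of the operators `u` (encoded by `true`) and `r` (encoded by `false`) on the
interval of definition of a triangular domain of `h`: `u` replaces `[a,b]` by `[a, x₁⁰]` and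
`r` replaces it by `[x₁⁰, b]`. For a word `σ = (α₁, …, α_m)`, `iterUR h σ (a,b)` is the
interval of the triangular domain `α₁(α₂(⋯ α_m(T_h)))` (the innermost letter acting first). -/
def iterUR (h : ℝ → ℝ) : List Bool → ℝ × ℝ → ℝ × ℝ
  | [], I => I
  | (c :: σ), I =>
      let J := iterUR h σ I
      if c then (J.1, splitPt h J.1 J.2) else (splitPt h J.1 J.2, J.2)

/-- with `c₁ = −min h'`, `c₂ = −max h'`, `r_B = 1/(1 + 1/c₁)`,
`r_H = 1/(1 + c₂)`, the inscribed squares of `u(T_h)` and `r(T_h)` have side at most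
`max{r_B, r_H}·l₀`, where `l₀ = x₁⁰ − a` is the side of `q(T_h)`; consequently, in the
recursive square covering of `T_h`, each of the `2^m` squares of the `m`-th step has side at
most `max{h(a) − h(b), b − a}·(max{r_B, r_H})^{m+1}`. -/
theorem stmt16 (a b : ℝ) (hab : a < b) (h h' : ℝ → ℝ)
    (hderiv : ∀ t ∈ Set.Icc a b, HasDerivWithinAt h (h' t) (Set.Icc a b) t)
    (hcont : ContinuousOn h' (Set.Icc a b))
    (hneg : ∀ t ∈ Set.Icc a b, h' t < 0)
    (c1 c2 rB rH : ℝ)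
    (hc1 : c1 = -sInf (h' '' Set.Icc a b)) (hc2 : c2 = -sSup (h' '' Set.Icc a b))
    (hrB : rB = 1 / (1 + 1 / c1)) (hrH : rH = 1 / (1 + c2)) :
    (splitPt h a (splitPt h a b) - a ≤ max rB rH * (splitPt h a b - a)) ∧
    (splitPt h (splitPt h a b) b - splitPt h a b ≤ max rB rH * (splitPt h a b - a)) ∧
    (∀ σ : List Bool,
      splitPt h (iterUR h σ (a, b)).1 (iterUR h σ (a, b)).2 - (iterUR h σ (a, b)).1 ≤
        max (h a - h b) (b - a) * (max rB rH) ^ (σ.length + 1)) := by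
  have hconth : ContinuousOn h (Set.Icc a b) := fun x hx =>
    (hderiv x hx).continuousWithinAt
  -- compactness facts about the image of h'
  have hne : (h' '' Set.Icc a b).Nonempty :=
    ⟨h' a, mem_image_of_mem _ (left_mem_Icc.2 hab.le)⟩
  have hcomp : IsCompact (h' '' Set.Icc a b) := isCompact_Icc.image_of_continuousOn hcont
  have hbddA : BddAbove (h' '' Set.Icc a b) := hcomp.bddAbove
  have hbddB : BddBelow (h' '' Set.Icc a b) := hcomp.bddBelow
  have hc2pos : 0 < c2 := by
    obtain ⟨x, hx, hxe⟩ := hcomp.sSup_mem hne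
    rw [hc2, ← hxe]
    linarith [hneg x hx]
  have hc12 : c2 ≤ c1 := by
    rw [hc1, hc2]
    have := (csInf_le hbddB hne.some_mem).trans (le_csSup hbddA hne.some_mem)
    linarith
  have hc1pos : 0 < c1 := lt_of_lt_of_le hc2pos hc12
  have h11 : (0:ℝ) < 1 + 1 / c1 := by positivity
  have h12 : (0:ℝ) < 1 + c2 := by linarith
  have hrBpos : 0 < rB := by rw [hrB]; positivity
  have hrHpos : 0 < rH := by rw [hrH]; positivity
  have hrB1 : rB ≤ 1 := by
    rw [hrB]
    rw [div_le_one h11]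
    have : 0 < 1 / c1 := by positivity
    linarith
  have hKpos : 0 < max rB rH := lt_max_of_lt_left hrBpos
  -- mean value bounds
  have mvt : ∀ s t, a ≤ s → s < t → t ≤ b →
      c2 * (t - s) ≤ h s - h t ∧ h s - h t ≤ c1 * (t - s) := by
    intro s t hs hst htb
    obtain ⟨c, hc, hceq⟩ := exists_hasDerivAt_eq_slope h h' hst
      (hconth.mono (Icc_subset_Icc hs htb))
      (fun x hx => (hderiv x ⟨hs.trans hx.1.le, hx.2.le.trans htb⟩).hasDerivAt
        (Icc_mem_nhds (lt_of_le_of_lt hs hx.1) (lt_of_lt_of_le hx.2 htb)))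
    have hcmem : c ∈ Set.Icc a b := ⟨hs.trans hc.1.le, hc.2.le.trans htb⟩
    have h1 : sInf (h' '' Set.Icc a b) ≤ h' c := csInf_le hbddB (mem_image_of_mem _ hcmem)
    have h2 : h' c ≤ sSup (h' '' Set.Icc a b) := le_csSup hbddA (mem_image_of_mem _ hcmem)
    have hts : 0 < t - s := by linarith
    have heq : h t - h s = h' c * (t - s) := by
      field_simp at hceq
      linarith
    have hcc1 : -h' c ≤ c1 := by rw [hc1]; linarith
    have hcc2 : c2 ≤ -h' c := by rw [hc2]; linarith
    constructor <;> nlinarith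
  -- characterization of the split point
  have key : ∀ α β, a ≤ α → α < β → β ≤ b →
      splitPt h α β ∈ Set.Ioo α β ∧ h (splitPt h α β) = splitPt h α β + h β - α := by
    intro α β hα hαβ hβ
    set g : ℝ → ℝ := fun x => h x - x - h β + α with hg
    have hgc : ContinuousOn g (Set.Icc α β) :=
      (((hconth.mono (Icc_subset_Icc hα hβ)).sub continuous_id.continuousOn).sub
        continuousOn_const).add continuousOn_const
    have hgval : g β < 0 := by simp only [hg]; linarith
    have hgval2 : 0 < g α := by
      have := (mvt α β hα hαβ hβ).1
      simp only [hg]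
      nlinarith
    have hiv : (0:ℝ) ∈ g '' Set.Ioo α β :=
      intermediate_value_Ioo' hαβ.le hgc ⟨hgval, hgval2⟩
    obtain ⟨x₀, hx₀, hgx₀⟩ := hiv
    -- g is strictly antitone on Icc a b
    have ganti : ∀ x ∈ Set.Icc a b, ∀ y ∈ Set.Icc a b, x < y → g y < g x := by
      intro x hx y hy hxy
      have := (mvt x y hx.1 hxy hy.2).1
      simp only [hg]
      nlinarith
    have hset : {x | x ∈ Set.Ioo α β ∧ h x = x + h β - α} = {x₀} := by
      ext y
      simp only [Set.mem_setOf_eq, Set.mem_singleton_iff]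
      constructor
      · rintro ⟨hy, hyeq⟩
        have hgy : g y = 0 := by simp only [hg]; linarith
        by_contra hne'
        rcases lt_or_gt_of_ne hne' with hlt | hgt
        · have := ganti y ⟨hα.trans hy.1.le, hy.2.le.trans hβ⟩ x₀
            ⟨hα.trans hx₀.1.le, hx₀.2.le.trans hβ⟩ hlt
          rw [hgx₀, hgy] at this; exact lt_irrefl 0 this
        · have := ganti x₀ ⟨hα.trans hx₀.1.le, hx₀.2.le.trans hβ⟩ y
            ⟨hα.trans hy.1.le, hy.2.le.trans hβ⟩ hgt
          rw [hgx₀, hgy] at this; exact lt_irrefl 0 this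
      · rintro rfl
        refine ⟨hx₀, ?_⟩
        have : g y = 0 := hgx₀
        simp only [hg] at this; linarith
    have hsplit : splitPt h α β = x₀ := by
      rw [splitPt, hset, csInf_singleton]
    rw [hsplit]
    refine ⟨hx₀, ?_⟩
    have : g x₀ = 0 := hgx₀
    simp only [hg] at this; linarith
  -- the two basic side bounds
  have sideB : ∀ α β, a ≤ α → α < β → β ≤ b → splitPt h α β - α ≤ rB * (β - α) := by
    intro α β hα hαβ hβ
    obtain ⟨⟨hx1, hx2⟩, heq⟩ := key α β hα hαβ hβ
    set x := splitPt h α β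
    have hm := (mvt x β (hα.trans hx1.le) hx2 hβ).2
    have hxa : x - α = h x - h β := by linarith
    have hfrac : (x - α) * (1 / c1) ≤ β - x := by
      rw [mul_one_div, div_le_iff₀ hc1pos]
      nlinarith
    rw [hrB, div_mul_eq_mul_div, one_mul, le_div_iff₀ h11]
    nlinarith
  have sideH : ∀ α β, a ≤ α → α < β → β ≤ b → splitPt h α β - α ≤ rH * (h α - h β) := by
    intro α β hα hαβ hβ
    obtain ⟨⟨hx1, hx2⟩, heq⟩ := key α β hα hαβ hβ
    set x := splitPt h α β
    have hm := (mvt α x hα hx1 (hx2.le.trans hβ)).1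
    have hxa : h x - h β = x - α := by linarith
    rw [hrH, div_mul_eq_mul_div, one_mul, le_div_iff₀ h12]
    nlinarith
  -- facts about the top-level split point
  obtain ⟨hx₀mem, hx₀eq⟩ := key a b le_rfl hab le_rfl
  set x₀ := splitPt h a b with hx₀def
  have hl₀pos : 0 < x₀ - a := by linarith [hx₀mem.1]
  refine ⟨?_, ?_, ?_⟩
  · -- u part
    have := sideB a x₀ le_rfl hx₀mem.1 hx₀mem.2.le
    calc splitPt h a x₀ - a ≤ rB * (x₀ - a) := this
      _ ≤ max rB rH * (x₀ - a) :=
        mul_le_mul_of_nonneg_right (le_max_left _ _) hl₀pos.le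
  · -- r part
    have h1 := sideH x₀ b hx₀mem.1.le hx₀mem.2 le_rfl
    have h2 : h x₀ - h b = x₀ - a := by linarith
    rw [h2] at h1
    calc splitPt h x₀ b - x₀ ≤ rH * (x₀ - a) := h1
      _ ≤ max rB rH * (x₀ - a) :=
        mul_le_mul_of_nonneg_right (le_max_right _ _) hl₀pos.le
  · -- recursive covering
    intro σ
    set M := max (h a - h b) (b - a) with hM
    set K := max rB rH with hK
    have hMab : b - a ≤ M := le_max_right _ _
    have hMpos : 0 < M := lt_of_lt_of_le (by linarith) hMab
    suffices H : ∀ τ : List Bool,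
        a ≤ (iterUR h τ (a, b)).1 ∧ (iterUR h τ (a, b)).1 < (iterUR h τ (a, b)).2 ∧
        (iterUR h τ (a, b)).2 ≤ b ∧
        splitPt h (iterUR h τ (a, b)).1 (iterUR h τ (a, b)).2 - (iterUR h τ (a, b)).1 ≤
          M * K ^ (τ.length + 1) by
      exact (H σ).2.2.2
    intro τ
    induction τ with
    | nil =>
      refine ⟨le_rfl, hab, le_rfl, ?_⟩
      have hbase : x₀ - a ≤ M * K :=
        calc x₀ - a ≤ rB * (b - a) := sideB a b le_rfl hab le_rfl
          _ ≤ K * M := mul_le_mul (le_max_left _ _) hMab (by linarith) hKpos.le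
          _ = M * K := mul_comm _ _
      simpa [iterUR] using hbase
    | cons c σ' ih =>
      obtain ⟨ihα, ihαβ, ihβ, ihside⟩ := ih
      set J := iterUR h σ' (a, b) with hJ
      obtain ⟨hxm, hxe⟩ := key J.1 J.2 ihα ihαβ ihβ
      set x := splitPt h J.1 J.2 with hx
      have hxside : x - J.1 ≤ M * K ^ (σ'.length + 1) := ihside
      have hunf : iterUR h (c :: σ') (a, b) =
          if c then (J.1, x) else (x, J.2) := rfl
      cases c with
      | true =>
        simp only [hunf, if_true, List.length_cons]
        refine ⟨ihα, hxm.1, hxm.2.le.trans ihβ, ?_⟩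
        calc splitPt h J.1 x - J.1 ≤ rB * (x - J.1) :=
              sideB J.1 x ihα hxm.1 (hxm.2.le.trans ihβ)
          _ ≤ K * (x - J.1) :=
              mul_le_mul_of_nonneg_right (le_max_left _ _) (by linarith [hxm.1])
          _ ≤ K * (M * K ^ (σ'.length + 1)) :=
              mul_le_mul_of_nonneg_left hxside hKpos.le
          _ = M * K ^ (σ'.length + 1 + 1) := by ring
      | false =>
        simp only [hunf, if_false, List.length_cons]
        refine ⟨ihα.trans hxm.1.le, hxm.2, ihβ, ?_⟩
        have h1 := sideH x J.2 (ihα.trans hxm.1.le) hxm.2 ihβ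
        have h2 : h x - h J.2 = x - J.1 := by linarith
        rw [h2] at h1
        calc splitPt h x J.2 - x ≤ rH * (x - J.1) := h1
          _ ≤ K * (x - J.1) :=
              mul_le_mul_of_nonneg_right (le_max_right _ _) (by linarith [hxm.1])
          _ ≤ K * (M * K ^ (σ'.length + 1)) :=
              mul_le_mul_of_nonneg_left hxside hKpos.le
          _ = M * K ^ (σ'.length + 1 + 1) := by ring
end
end
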